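/- Let μ < 0, T ≥ 1, and let f : ℝ → ℝ be continuously differentiable on [1, T]. Then ∫₁^T z^(μ−1)·f(z)² dz ≤ (2/|μ|)·f(1)² + (4/μ²)·∫₁^T z^(μ+1)·f'(z)² dz. -/

import Mathlib

open Set

/-- One-dimensional Hardy-type inequality with weight `z^(μ−1)`, `μ < 0`, on `[1, T]`. -/
theorem stmt9 (μ T : ℝ) (hμ : μ < 0) (hT : 1 ≤ T) (f f' : ℝ → ℝ)
    (hf : ∀ z ∈ Icc (1 : ℝ) T, HasDerivAt f (f' z) z)
    (hf' : ContinuousOn f' (Icc (1 : ℝ) T)) :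
    ∫ z in (1 : ℝ)..T, z ^ (μ - 1) * f z ^ 2
      ≤ (2 / |μ|) * f 1 ^ 2 + (4 / μ ^ 2) * ∫ z in (1 : ℝ)..T, z ^ (μ + 1) * f' z ^ 2 := by
  have hμ0 : μ ≠ 0 := hμ.ne
  have huIcc : uIcc (1:ℝ) T = Icc 1 T := uIcc_of_le hT
  have hpos : ∀ z ∈ Icc (1:ℝ) T, (0:ℝ) < z := fun z hz => lt_of_lt_of_le one_pos hz.1
  have hfc : ContinuousOn f (Icc (1:ℝ) T) :=
    fun z hz => (hf z hz).continuousAt.continuousWithinAt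
  -- derivative of u z = z^μ/μ
  have hu : ∀ z ∈ Icc (1:ℝ) T, HasDerivAt (fun z : ℝ => z ^ μ / μ) (z ^ (μ - 1)) z := by
    intro z hz
    have h := (Real.hasDerivAt_rpow_const (p := μ) (Or.inl (hpos z hz).ne')).div_const μ
    rw [mul_div_cancel_left₀ _ hμ0] at h
    exact h
  have hv : ∀ z ∈ Icc (1:ℝ) T, HasDerivAt (fun z => f z ^ 2) (2 * f z * f' z) z := by
    intro z hz
    simpa [pow_one] using ((hf z hz).fun_pow 2)
  -- continuity facts
  have hcu' : ContinuousOn (fun z : ℝ => z ^ (μ - 1)) (Icc 1 T) :=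
    ContinuousOn.rpow_const continuousOn_id (fun z hz => Or.inl (hpos z hz).ne')
  have hcu : ContinuousOn (fun z : ℝ => z ^ μ / μ) (Icc 1 T) :=
    (ContinuousOn.rpow_const continuousOn_id (fun z hz => Or.inl (hpos z hz).ne')).div_const μ
  have hcv' : ContinuousOn (fun z : ℝ => 2 * f z * f' z) (Icc 1 T) :=
    (continuousOn_const.mul hfc).mul hf'
  have hcw : ContinuousOn (fun z : ℝ => z ^ (μ + 1)) (Icc 1 T) :=
    ContinuousOn.rpow_const continuousOn_id (fun z hz => Or.inl (hpos z hz).ne')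
  have hiu' : IntervalIntegrable (fun z : ℝ => z ^ (μ - 1)) MeasureTheory.volume 1 T :=
    (huIcc ▸ hcu').intervalIntegrable
  have hiv' : IntervalIntegrable (fun z : ℝ => 2 * f z * f' z) MeasureTheory.volume 1 T :=
    (huIcc ▸ hcv').intervalIntegrable
  -- integration by parts
  have hIBP := intervalIntegral.integral_mul_deriv_eq_deriv_mul
      (fun z hz => hu z (huIcc ▸ hz)) (fun z hz => hv z (huIcc ▸ hz)) hiu' hiv'
  simp only [Real.one_rpow] at hIBP
  set A := ∫ z in (1:ℝ)..T, z ^ (μ - 1) * f z ^ 2 with hA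
  set B := ∫ z in (1:ℝ)..T, z ^ (μ + 1) * f' z ^ 2 with hB
  set C := ∫ z in (1:ℝ)..T, (z ^ μ / μ) * (2 * f z * f' z) with hC
  -- key pointwise estimate and monotonicity of the integral
  have hmono : -C ≤ (1/2) * A + (2/μ^2) * B := by
    have hiA : IntervalIntegrable (fun z : ℝ => z ^ (μ - 1) * f z ^ 2)
        MeasureTheory.volume 1 T :=
      (huIcc ▸ (hcu'.mul (hfc.pow 2))).intervalIntegrable
    have hiB : IntervalIntegrable (fun z : ℝ => z ^ (μ + 1) * f' z ^ 2)
        MeasureTheory.volume 1 T :=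
      (huIcc ▸ (hcw.mul (hf'.pow 2))).intervalIntegrable
    have hiC : IntervalIntegrable (fun z : ℝ => -((z ^ μ / μ) * (2 * f z * f' z)))
        MeasureTheory.volume 1 T :=
      (huIcc ▸ (hcu.mul hcv').neg).intervalIntegrable
    have hCeq : -C = ∫ z in (1:ℝ)..T, -((z ^ μ / μ) * (2 * f z * f' z)) := by
      rw [hC, ← intervalIntegral.integral_neg]
    have hsum : (1/2) * A + (2/μ^2) * B
        = ∫ z in (1:ℝ)..T, ((1/2) * (z ^ (μ - 1) * f z ^ 2)
            + (2/μ^2) * (z ^ (μ + 1) * f' z ^ 2)) := by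
      rw [intervalIntegral.integral_add (hiA.const_mul _) (hiB.const_mul _),
        intervalIntegral.integral_const_mul, intervalIntegral.integral_const_mul]
    rw [hCeq, hsum]
    apply intervalIntegral.integral_mono_on hT hiC
      ((hiA.const_mul _).add (hiB.const_mul _))
    intro z hz
    have hz0 : (0:ℝ) < z := hpos z hz
    set p := z ^ ((μ - 1)/2) with hp
    set q := z ^ ((μ + 1)/2) with hq
    have hpp : z ^ (μ - 1) = p * p := by
      rw [hp, ← Real.rpow_add hz0]; norm_num
    have hqq : z ^ (μ + 1) = q * q := by
      rw [hq, ← Real.rpow_add hz0]; norm_num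
    have hpq : z ^ μ = p * q := by
      rw [hp, hq, ← Real.rpow_add hz0]; congr 1; ring
    rw [hpp, hqq, hpq]
    have hid : (1/2) * (p * p * f z ^ 2) + (2/μ^2) * (q * q * f' z ^ 2)
        - (-((p * q / μ) * (2 * f z * f' z)))
        = (1/(2*μ^2)) * (μ * (p * f z) + 2 * (q * f' z))^2 := by
      field_simp
      ring
    have hnn : 0 ≤ (1/(2*μ^2)) * (μ * (p * f z) + 2 * (q * f' z))^2 := by positivity
    linarith
  -- the boundary term at T is nonpositive
  have hTT : T ^ μ / μ * f T ^ 2 ≤ 0 := by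
    have h1 : (0:ℝ) < T ^ μ := Real.rpow_pos_of_pos (by linarith) μ
    have h2 : T ^ μ / μ ≤ 0 := div_nonpos_of_nonneg_of_nonpos h1.le hμ.le
    exact mul_nonpos_of_nonpos_of_nonneg h2 (sq_nonneg _)
  -- assemble
  rw [abs_of_neg hμ]
  have e1 : (2/(-μ)) * f 1 ^ 2 = -2 * (1/μ * f 1 ^ 2) := by
    rw [div_neg, neg_mul]; ring
  have e2 : (4/μ^2) * B = 2 * ((2/μ^2) * B) := by ring
  -- hIBP : C = T^μ/μ * f T^2 - 1/μ * f 1^2 - A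
  linarith [hIBP, hmono, hTT]
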